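/- Let M be a positive affine monoid (a finitely generated submonoid of ℤ^d whose only unit is 0). Then every nonzero element of M has a finite maximal decomposition length into nonzero elements, and the set of indecomposable elements (the Hilbert basis) is finite and generates M. -/

import Mathlib

/-- The set of lengths of decompositions of `m` into nonzero elements of `M`. -/
def decompLengths {d : ℕ} (M : AddSubmonoid (Fin d → ℤ)) (m : Fin d → ℤ) : Set ℕ :=
  {n | ∃ l : List (Fin d → ℤ), l.length = n ∧ (∀ x ∈ l, x ∈ M ∧ x ≠ 0) ∧ l.sum = m}

/-- The set of indecomposable (nonzero) elements of `M`: the Hilbert basis. -/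
def hilbertBasis {d : ℕ} (M : AddSubmonoid (Fin d → ℤ)) : Set (Fin d → ℤ) :=
  {m | m ∈ M ∧ m ≠ 0 ∧ ∀ a ∈ M, ∀ b ∈ M, a + b = m → a = 0 ∨ b = 0}

/-- For a positive affine monoid `M ⊆ ℤ^d` (finitely generated, only
unit `0`): every nonzero element has a finite maximal decomposition length, and
the set of indecomposable elements is finite and generates `M`. -/
theorem positive_affine_monoid_hilbert {d : ℕ} (M : AddSubmonoid (Fin d → ℤ))
    (hfg : M.FG) (hpos : ∀ m ∈ M, -m ∈ M → m = 0) :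
    (∀ m ∈ M, m ≠ 0 → ∃ n : ℕ, IsGreatest (decompLengths M m) n) ∧
    (hilbertBasis M).Finite ∧
    AddSubmonoid.closure (hilbertBasis M) = M := by
  classical
  obtain ⟨S, hS⟩ := hfg
  set T : Finset (Fin d → ℤ) := S.erase 0 with hTdef
  have hTM : ∀ t ∈ T, t ∈ M ∧ t ≠ 0 := by
    intro t ht
    refine ⟨?_, (Finset.mem_erase.1 ht).1⟩
    rw [← hS]
    exact AddSubmonoid.subset_closure (Finset.mem_of_mem_erase ht)
  have hclT : AddSubmonoid.closure (T : Set (Fin d → ℤ)) = M := by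
    apply le_antisymm
    · rw [AddSubmonoid.closure_le]
      intro t ht
      exact (hTM t ht).1
    · rw [← hS, AddSubmonoid.closure_le]
      intro s hs
      by_cases h0 : s = 0
      · rw [h0]; exact zero_mem _
      · exact AddSubmonoid.subset_closure (Finset.mem_erase.2 ⟨h0, hs⟩)
  -- every element of M has a representation
  have hrep : ∀ x ∈ M, ∃ c : {t // t ∈ T} → ℕ, ∑ t : {t // t ∈ T}, c t • t.1 = x := by
    intro x hx
    have hx' : x ∈ AddSubmonoid.closure (T : Set (Fin d → ℤ)) := hclT ▸ hx
    clear hx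
    induction hx' using AddSubmonoid.closure_induction with
    | mem y hy =>
      refine ⟨fun t => if t = ⟨y, hy⟩ then 1 else 0, ?_⟩
      simp [ite_smul]
    | zero => exact ⟨0, by simp⟩
    | add a b _ _ ha hb =>
      obtain ⟨ca, hca⟩ := ha
      obtain ⟨cb, hcb⟩ := hb
      refine ⟨ca + cb, ?_⟩
      have hsp : ∀ t : {t // t ∈ T}, (ca + cb) t • t.1 = ca t • t.1 + cb t • t.1 := fun t => by
        simp [add_smul]
      simp_rw [hsp, Finset.sum_add_distrib, hca, hcb]
  -- no nontrivial representation of 0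
  have hzero : ∀ c : {t // t ∈ T} → ℕ, ∑ t : {t // t ∈ T}, c t • t.1 = 0 → c = 0 := by
    intro c hc
    by_contra hne
    obtain ⟨t0, ht0⟩ : ∃ t0, c t0 ≠ 0 := by
      by_contra h
      push_neg at h
      exact hne (funext h)
    set c' : {t // t ∈ T} → ℕ := fun t => c t - (if t = t0 then 1 else 0) with hc'
    have hsplit : ∀ t, c t = c' t + (if t = t0 then 1 else 0) := by
      intro t
      by_cases h : t = t0 <;> simp [hc', h] <;> omega
    have hsum : (0 : Fin d → ℤ) = (∑ t : {t // t ∈ T}, c' t • t.1) + t0.1 := by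
      rw [← hc]
      have : ∀ t : {t // t ∈ T}, c t • t.1 = c' t • t.1 + (if t = t0 then 1 else 0) • t.1 := by
        intro t; rw [← add_smul, ← hsplit]
      simp_rw [this, Finset.sum_add_distrib]
      congr 1
      simp [ite_smul]
    have hmem : (∑ t : {t // t ∈ T}, c' t • t.1) ∈ M :=
      AddSubmonoid.sum_mem M fun t _ => AddSubmonoid.nsmul_mem M (hTM t.1 t.2).1 _
    have hneg : -t0.1 ∈ M := by
      have : -t0.1 = ∑ t : {t // t ∈ T}, c' t • t.1 := by
        have := hsum
        linear_combination (norm := abel) this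
      rw [this]; exact hmem
    exact (hTM t0.1 t0.2).2 (hpos t0.1 (hTM t0.1 t0.2).1 hneg)
  -- solution sets are finite
  have hsolfin : ∀ m : Fin d → ℤ,
      {c : {t // t ∈ T} → ℕ | ∑ t : {t // t ∈ T}, c t • t.1 = m}.Finite := by
    intro m
    by_contra hinf
    have hinf' : {c : {t // t ∈ T} → ℕ | ∑ t : {t // t ∈ T}, c t • t.1 = m}.Infinite := hinf
    let f := hinf'.natEmbedding
    have hpwo : {c : {t // t ∈ T} → ℕ | ∑ t : {t // t ∈ T}, c t • t.1 = m}.IsPWO :=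
      Set.isPWO_of_wellQuasiOrderedLE _
    obtain ⟨i, j, hij, hle⟩ := hpwo (fun n => f n)
    have hle' : ∀ t, (f i).1 t ≤ (f j).1 t := fun t => hle t
    set c := (f i).1 with hcdef
    set c' := (f j).1 with hc'def
    have hle2 : ∀ t, c t ≤ c' t := hle'
    have hcc' : ∀ t, c' t = c t + (c' t - c t) := fun t => by
      have := hle2 t; omega
    have hdsum : ∑ t : {t // t ∈ T}, (c' t - c t) • t.1 = 0 := by
      have h1 : ∑ t : {t // t ∈ T}, c' t • t.1 = m := (f j).2
      have h2 : ∑ t : {t // t ∈ T}, c t • t.1 = m := (f i).2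
      have h3 : ∑ t : {t // t ∈ T}, c' t • t.1
          = (∑ t : {t // t ∈ T}, c t • t.1) + ∑ t : {t // t ∈ T}, (c' t - c t) • t.1 := by
        rw [← Finset.sum_add_distrib]
        apply Finset.sum_congr rfl
        intro t _
        rw [← add_smul, ← hcc']
      rw [h1, h2] at h3
      linear_combination (norm := abel) h3.symm
    have := hzero _ hdsum
    have hceq : c = c' := by
      funext t
      have h4 : c' t - c t = 0 := congrFun this t
      have := hle2 t
      omega
    exact absurd (Subtype.ext hceq : f i = f j) (by
      intro h
      exact (Nat.ne_of_lt hij) (f.injective h))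
  -- list decompositions give representations with big total
  have hlist : ∀ l : List (Fin d → ℤ), (∀ x ∈ l, x ∈ M ∧ x ≠ 0) →
      ∃ c : {t // t ∈ T} → ℕ, ∑ t : {t // t ∈ T}, c t • t.1 = l.sum ∧
        l.length ≤ ∑ t : {t // t ∈ T}, c t := by
    intro l
    induction l with
    | nil => intro _; exact ⟨0, by simp⟩
    | cons x l ih =>
      intro hl
      obtain ⟨cl, hcl, hlen⟩ := ih (fun y hy => hl y (List.mem_cons_of_mem _ hy))
      obtain ⟨cx, hcx⟩ := hrep x (hl x (List.mem_cons_self)).1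
      have hcxne : cx ≠ 0 := by
        intro h
        exact (hl x (List.mem_cons_self)).2 (by rw [← hcx, h]; simp)
      have hone : 1 ≤ ∑ t : {t // t ∈ T}, cx t := by
        by_contra h
        push_neg at h
        apply hcxne
        funext t
        have h1 := Finset.single_le_sum (f := cx) (fun t _ => Nat.zero_le _) (Finset.mem_univ t)
        show cx t = 0
        omega
      refine ⟨cx + cl, ?_, ?_⟩
      · have hsp : ∀ t : {t // t ∈ T}, (cx + cl) t • t.1 = cx t • t.1 + cl t • t.1 :=
          fun t => by simp [add_smul]
        simp_rw [hsp, Finset.sum_add_distrib, hcx, hcl]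
        simp
      · have hsplit2 : ∑ t : {t // t ∈ T}, (cx + cl) t
            = (∑ t : {t // t ∈ T}, cx t) + ∑ t : {t // t ∈ T}, cl t := by
          simp [Finset.sum_add_distrib]
        rw [List.length_cons, hsplit2]
        omega
  -- Part 1
  have hP1 : ∀ m ∈ M, m ≠ 0 → ∃ n : ℕ, IsGreatest (decompLengths M m) n := by
    intro m hm hm0
    have hne : (decompLengths M m).Nonempty :=
      ⟨1, [m], rfl, by rintro x hx; rw [List.mem_singleton] at hx; exact hx ▸ ⟨hm, hm0⟩, by simp⟩
    have hbdd : BddAbove (decompLengths M m) := by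
      obtain ⟨B, hB⟩ := Set.Finite.bddAbove
        ((hsolfin m).image (fun c => ∑ t : {t // t ∈ T}, c t))
      refine ⟨B, ?_⟩
      rintro n ⟨l, hlen, hl, hsum⟩
      obtain ⟨c, hc, hc2⟩ := hlist l hl
      have : (∑ t : {t // t ∈ T}, c t) ∈
          (fun c : {t // t ∈ T} → ℕ => ∑ t : {t // t ∈ T}, c t) ''
            {c | ∑ t : {t // t ∈ T}, c t • t.1 = m} :=
        ⟨c, hc.trans hsum, rfl⟩
      have := hB this
      omega
    exact ⟨sSup (decompLengths M m), Nat.sSup_mem hne hbdd, fun n hn => le_csSup hbdd hn⟩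
  refine ⟨hP1, ?_, ?_⟩
  · -- Part 2: Hilbert basis finite
    apply Set.Finite.subset T.finite_toSet
    intro m hm
    obtain ⟨hmM, hm0, hind⟩ := hm
    obtain ⟨c, hc⟩ := hrep m hmM
    have hcne : c ≠ 0 := by
      intro h
      exact hm0 (by rw [← hc, h]; simp)
    obtain ⟨t0, ht0⟩ : ∃ t0, c t0 ≠ 0 := by
      by_contra h
      push_neg at h
      exact hcne (funext h)
    set c' : {t // t ∈ T} → ℕ := fun t => c t - (if t = t0 then 1 else 0) with hc'
    have hsum : m = t0.1 + ∑ t : {t // t ∈ T}, c' t • t.1 := by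
      rw [← hc]
      have : ∀ t : {t // t ∈ T}, c t • t.1 = (if t = t0 then 1 else 0) • t.1 + c' t • t.1 := by
        intro t
        rw [← add_smul]
        congr 1
        by_cases h : t = t0 <;> simp [hc', h] <;> omega
      simp_rw [this, Finset.sum_add_distrib]
      congr 1
      simp [ite_smul]
    have hmem : (∑ t : {t // t ∈ T}, c' t • t.1) ∈ M :=
      AddSubmonoid.sum_mem M fun t _ => AddSubmonoid.nsmul_mem M (hTM t.1 t.2).1 _
    rcases hind t0.1 (hTM t0.1 t0.2).1 _ hmem hsum.symm with h | h
    · exact absurd h (hTM t0.1 t0.2).2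
    · rw [h, add_zero] at hsum
      rw [hsum]
      exact t0.2
  · -- Part 3: closure of hilbert basis is M
    apply le_antisymm
    · rw [AddSubmonoid.closure_le]
      intro x hx
      exact hx.1
    · intro m hm
      by_cases hm0 : m = 0
      · rw [hm0]; exact zero_mem _
      obtain ⟨n, hn, hub⟩ := hP1 m hm hm0
      obtain ⟨l, hlen, hl, hsum⟩ := hn
      have hHB : ∀ x ∈ l, x ∈ hilbertBasis M := by
        intro x hx
        refine ⟨(hl x hx).1, (hl x hx).2, ?_⟩
        intro a ha b hb hab
        by_contra hcon
        push_neg at hcon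
        obtain ⟨ha0, hb0⟩ := hcon
        obtain ⟨l1, l2, hl12⟩ := List.append_of_mem hx
        have hmem' : (n + 1) ∈ decompLengths M m := by
          refine ⟨l1 ++ a :: b :: l2, ?_, ?_, ?_⟩
          · have := hlen
            rw [hl12] at this
            simp at this ⊢
            omega
          · intro y hy
            simp only [List.mem_append, List.mem_cons] at hy
            rcases hy with hy | hy | hy | hy
            · exact hl y (by rw [hl12]; simp [hy])
            · exact hy ▸ ⟨ha, ha0⟩
            · exact hy ▸ ⟨hb, hb0⟩
            · exact hl y (by rw [hl12]; simp [hy])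
          · rw [← hsum, hl12]
            simp [List.sum_append, ← hab]
            abel
        have := hub hmem'
        omega
      rw [← hsum]
      exact AddSubmonoid.list_sum_mem _ fun x hx => AddSubmonoid.subset_closure (hHB x hx)
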